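/- Let p be a discrete ultrafilter on ℕ: for every f : ℕ → ℝ there is A ∈ p such that f '' A is a discrete subspace of ℝ. Then for every completely regular Hausdorff topological space X, p is X-discrete: for every f : ℕ → X there is A ∈ p such that f '' A is a discrete subspace of X. -/

import Mathlib

universe u

open Set Filter Topology
open scoped NNReal ENNReal unitInterval

/-- Discreteness pulls back along a continuous map injective on the set. -/
lemma discrete_of_image_aux {X : Type u} [TopologicalSpace X] {S : Set X} {G : X → ℝ}
    (hG : Continuous G) (hinj : Set.InjOn G S) (hd : DiscreteTopology ↥(G '' S)) :
    DiscreteTopology ↥S := by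
  rw [discreteTopology_subtype_iff] at hd ⊢
  intro x hx
  have hGx : 𝓝[≠] (G x) ⊓ 𝓟 (G '' S) = ⊥ := hd (G x) (Set.mem_image_of_mem G hx)
  rw [← Filter.map_eq_bot_iff (m := G)]
  refine le_bot_iff.mp ?_
  calc Filter.map G (𝓝[≠] x ⊓ 𝓟 S)
      = Filter.map G (𝓝 x ⊓ 𝓟 ({x}ᶜ ∩ S)) := by
        rw [nhdsWithin, inf_assoc, inf_principal]
    _ ≤ Filter.map G (𝓝 x) ⊓ Filter.map G (𝓟 ({x}ᶜ ∩ S)) := Filter.map_inf_le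
    _ ≤ 𝓝 (G x) ⊓ 𝓟 (G '' ({x}ᶜ ∩ S)) :=
        inf_le_inf (hG.tendsto x) (by rw [Filter.map_principal])
    _ ≤ 𝓝 (G x) ⊓ 𝓟 ({G x}ᶜ ∩ G '' S) := by
        refine inf_le_inf_left _ (Filter.principal_mono.mpr ?_)
        rintro _ ⟨y, ⟨hyx, hyS⟩, rfl⟩
        refine ⟨?_, Set.mem_image_of_mem G hyS⟩
        simp only [Set.mem_compl_iff, Set.mem_singleton_iff] at hyx ⊢
        exact fun hGy => hyx (hinj hyS hx hGy)
    _ = 𝓝[≠] (G x) ⊓ 𝓟 (G '' S) := by rw [nhdsWithin, inf_assoc, inf_principal]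
    _ = ⊥ := hGx

/-- A nonzero bounded power series has finitely many zeros in `[1/4, 1/2]`. -/
lemma finite_zeros_aux (a : ℕ → ℝ) (ha : ∀ k, |a k| ≤ 1) (k0 : ℕ) (h0 : a k0 ≠ 0) :
    {c : ℝ | c ∈ Set.Icc (4⁻¹ : ℝ) 2⁻¹ ∧
      (FormalMultilinearSeries.ofScalars ℝ a).sum c = 0}.Finite := by
  set pw := FormalMultilinearSeries.ofScalars ℝ a with hpw
  have hnorm : ∀ n, ‖pw n‖ ≤ 1 := by
    intro n
    rw [hpw, FormalMultilinearSeries.ofScalars_norm, Real.norm_eq_abs]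
    exact ha n
  have hrad : (ENNReal.ofReal (3 / 4)) ≤ pw.radius := by
    have hb : ∀ n : ℕ, ‖pw n‖ * ((3 / 4 : ℝ≥0) : ℝ) ^ n ≤ 1 := by
      intro n
      have h1 : ((3 / 4 : ℝ≥0) : ℝ) ^ n ≤ 1 := by
        apply pow_le_one₀ <;> norm_num
      have h2 : (0 : ℝ) ≤ ((3 / 4 : ℝ≥0) : ℝ) ^ n := by positivity
      nlinarith [hnorm n, norm_nonneg (pw n)]
    have := pw.le_radius_of_bound 1 hb
    rwa [ENNReal.ofReal_eq_coe_nnreal (by norm_num : (0:ℝ) ≤ 3/4)]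
  have hpos : (0 : ℝ≥0∞) < pw.radius :=
    lt_of_lt_of_le (by simp [ENNReal.ofReal_pos]) hrad
  have hball : HasFPowerSeriesOnBall pw.sum pw 0 pw.radius := pw.hasFPowerSeriesOnBall hpos
  have hanal : AnalyticOnNhd ℝ pw.sum (Metric.ball (0 : ℝ) (3 / 4)) := by
    refine hball.analyticOnNhd.mono ?_
    rw [← Metric.emetric_ball]
    exact EMetric.ball_subset_ball hrad
  by_contra hinf
  obtain ⟨z, hzK, hz⟩ := Set.Infinite.exists_accPt_of_subset_isCompact hinf isCompact_Icc
    (fun c hc => hc.1)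
  rw [accPt_iff_frequently] at hz
  have hfreq : ∃ᶠ y in 𝓝[≠] z, pw.sum y = 0 := by
    rw [frequently_nhdsWithin_iff]
    exact hz.mono (fun y hy => ⟨hy.2.2, hy.1⟩)
  have hzball : z ∈ Metric.ball (0 : ℝ) (3 / 4) := by
    rw [Metric.mem_ball, Real.dist_eq, sub_zero]
    rw [abs_lt]; constructor <;> nlinarith [hzK.1, hzK.2]
  have heq : Set.EqOn pw.sum 0 (Metric.ball (0 : ℝ) (3 / 4)) :=
    hanal.eqOn_zero_of_preconnected_of_frequently_eq_zero
      (convex_ball _ _).isPreconnected hzball hfreq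
  have hzero : HasFPowerSeriesAt (0 : ℝ → ℝ) pw 0 := by
    refine hball.hasFPowerSeriesAt.congr ?_
    filter_upwards [Metric.ball_mem_nhds (0 : ℝ) (by norm_num : (0:ℝ) < 3/4)] with y hy
    exact heq hy
  have : pw = 0 := hzero.eq_zero
  rw [hpw, FormalMultilinearSeries.ofScalars_series_eq_zero] at this
  exact h0 (by rw [this]; rfl)

/-- Every discrete ultrafilter on `ℕ` (for every `f : ℕ → ℝ` some `A ∈ p` has
`f '' A` discrete) is `X`-discrete for every completely regular Hausdorff space `X`. -/
theorem xDiscrete_of_discrete (p : Ultrafilter ℕ)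
    (h : ∀ f : ℕ → ℝ, ∃ A ∈ p, DiscreteTopology ↥(f '' A)) :
    ∀ (X : Type u) [TopologicalSpace X] [T2Space X] [CompletelyRegularSpace X],
      ∀ f : ℕ → X, ∃ A ∈ p, DiscreteTopology ↥(f '' A) := by
  intro X _ _ _ f
  -- separating functions for each pair of indices
  have key : ∀ q : ℕ × ℕ, ∃ φ : X → ℝ, Continuous φ ∧ (∀ x, φ x ∈ Set.Icc (0:ℝ) 1) ∧
      (f q.1 ≠ f q.2 → φ (f q.1) = 0 ∧ φ (f q.2) = 1) := by
    rintro ⟨i, j⟩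
    by_cases hij : f i = f j
    · exact ⟨fun _ => 0, continuous_const, fun x => ⟨le_rfl, zero_le_one⟩,
        fun hne => absurd hij hne⟩
    · obtain ⟨g, hgc, hg0, hg1⟩ := CompletelyRegularSpace.completely_regular (f i) {f j}
        isClosed_singleton (by simpa using hij)
      refine ⟨fun x => (g x : ℝ), continuous_subtype_val.comp hgc, fun x => (g x).2, fun _ => ?_⟩
      constructor
      · show ((g (f i) : ℝ)) = 0
        rw [hg0]; rfl
      · show ((g (f j) : ℝ)) = 1
        rw [hg1 (Set.mem_singleton _)]; rfl
  choose φ hφc hφm hφsep using key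
  set Φ : ℕ → X → ℝ := fun k => φ (Nat.unpair k) with hΦ
  have hΦ01 : ∀ k x, Φ k x ∈ Set.Icc (0:ℝ) 1 := fun k x => hφm _ x
  have hΦabs : ∀ k (x y : X), |Φ k x - Φ k y| ≤ 1 := by
    intro k x y
    have h1 := hΦ01 k x; have h2 := hΦ01 k y
    rw [Set.mem_Icc] at h1 h2
    rw [abs_le]; constructor <;> linarith [h1.1, h1.2, h2.1, h2.2]
  -- the bad set of parameters
  set Bad : Set ℝ := ⋃ q : ℕ × ℕ, {c : ℝ | c ∈ Set.Icc (4⁻¹ : ℝ) 2⁻¹ ∧ f q.1 ≠ f q.2 ∧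
      (FormalMultilinearSeries.ofScalars ℝ
        (fun k => Φ k (f q.1) - Φ k (f q.2))).sum c = 0} with hBad
  have hBadC : Bad.Countable := by
    refine Set.countable_iUnion fun q => ?_
    by_cases hq : f q.1 ≠ f q.2
    · refine Set.Countable.mono ?_
        (finite_zeros_aux (fun k => Φ k (f q.1) - Φ k (f q.2))
          (fun k => hΦabs k _ _) (Nat.pair q.1 q.2) ?_).countable
      · exact fun c hc => ⟨hc.1, hc.2.2⟩
      · have hh : Φ (Nat.pair q.1 q.2) = φ q := by rw [hΦ]; simp [Nat.unpair_pair]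
        show Φ (Nat.pair q.1 q.2) (f q.1) - Φ (Nat.pair q.1 q.2) (f q.2) ≠ 0
        rw [hh, (hφsep q hq).1, (hφsep q hq).2]
        norm_num
    · refine Set.Countable.mono (fun c hc => absurd hc.2.1 hq) Set.countable_empty
  -- pick a good parameter c
  have hIccU : ¬ (Set.Icc (4⁻¹ : ℝ) 2⁻¹).Countable := by
    intro hc
    rw [← Cardinal.le_aleph0_iff_set_countable,
      Cardinal.mk_Icc_real (by norm_num : (4⁻¹ : ℝ) < 2⁻¹)] at hc
    exact absurd hc (not_le.mpr Cardinal.aleph0_lt_continuum)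
  obtain ⟨c, hcI, hcB⟩ := Set.not_subset.mp (fun hsub => hIccU (hBadC.mono hsub))
  have hc0 : (0:ℝ) < c := lt_of_lt_of_le (by norm_num) hcI.1
  have hc1 : c < 1 := lt_of_le_of_lt hcI.2 (by norm_num)
  -- the continuous function
  set g : X → ℝ := fun x => ∑' k, Φ k x * c ^ k with hgdef
  have hbound : ∀ (k : ℕ) (x : X), ‖Φ k x * c ^ k‖ ≤ c ^ k := by
    intro k x
    have h1 := hΦ01 k x; rw [Set.mem_Icc] at h1
    rw [Real.norm_eq_abs, abs_mul, abs_of_nonneg (pow_nonneg hc0.le k),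
      abs_of_nonneg h1.1]
    nlinarith [pow_nonneg hc0.le k, h1.1, h1.2]
  have hgeo : Summable (fun k : ℕ => c ^ k) := summable_geometric_of_lt_one hc0.le hc1
  have hsum : ∀ x : X, Summable (fun k => Φ k x * c ^ k) :=
    fun x => Summable.of_norm_bounded hgeo (fun k => hbound k x)
  have hgc : Continuous g :=
    continuous_tsum (fun k => (hφc _).mul continuous_const) hgeo (fun k x => hbound k x)
  -- injectivity on the range of f
  have hinj : ∀ i j : ℕ, g (f i) = g (f j) → f i = f j := by
    intro i j hgij
    by_contra hne
    apply hcB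
    rw [hBad]
    refine Set.mem_iUnion.mpr ⟨(i, j), hcI, hne, ?_⟩
    have hs : (FormalMultilinearSeries.ofScalars ℝ
        (fun k => Φ k (f i) - Φ k (f j))).sum c
        = ∑' k, (Φ k (f i) - Φ k (f j)) * c ^ k := by
      have := FormalMultilinearSeries.ofScalars_sum_eq
        (fun k => Φ k (f i) - Φ k (f j)) c
      simpa only [smul_eq_mul, FormalMultilinearSeries.ofScalarsSum] using this
    rw [hs]
    have : (fun k => (Φ k (f i) - Φ k (f j)) * c ^ k)
        = fun k => Φ k (f i) * c ^ k - Φ k (f j) * c ^ k := by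
      funext k; ring
    rw [this, Summable.tsum_sub (hsum (f i)) (hsum (f j))]
    exact sub_eq_zero.mpr hgij
  obtain ⟨A, hAp, hAd⟩ := h (fun n => g (f n))
  refine ⟨A, hAp, ?_⟩
  have himg : (fun n => g (f n)) '' A = g '' (f '' A) := (Set.image_image g f A).symm
  rw [himg] at hAd
  exact discrete_of_image_aux hgc
    (by rintro _ ⟨i, hi, rfl⟩ _ ⟨j, hj, rfl⟩ hgij; exact hinj i j hgij) hAd
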